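/- Let (a_n)_{n≥0} be nonnegative reals with ∑_{n=1}^∞ n^{10} a_n < ∞ and set C(x,y) = ∑_{n=0}^∞ a_n T_n(⟨x,y⟩) for x,y ∈ S¹ ⊂ ℝ², where T_n is the Chebyshev polynomial of the first kind. Let x₀ ∈ S¹ and let γ, τ : (−1,1) → S¹ be continuously differentiable curves with γ(0) = τ(0) = x₀, γ'(0) = ξ, τ'(0) = σ. Then the mixed partial derivative ∂²/∂t∂s [C(γ(t), τ(s))] at (t,s) = (0,0) exists and equals (∑_{n=1}^∞ n² a_n) · ⟨ξ, σ⟩. -/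

import Mathlib

open Set Real
open scoped RealInnerProductSpace

section ChebyshevBounds

open Polynomial Polynomial.Chebyshev

private lemma abs_sin_nat_mul (m : ℕ) (θ : ℝ) : |Real.sin (m * θ)| ≤ m * |Real.sin θ| := by
  induction m with
  | zero => simp
  | succ k ih =>
    have e : ((k+1 : ℕ) : ℝ) * θ = k * θ + θ := by push_cast; ring
    rw [e, Real.sin_add]
    calc |Real.sin (k*θ) * Real.cos θ + Real.cos (k*θ) * Real.sin θ|
        ≤ |Real.sin (k*θ) * Real.cos θ| + |Real.cos (k*θ) * Real.sin θ| := abs_add_le _ _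
      _ ≤ |Real.sin (k*θ)| * 1 + 1 * |Real.sin θ| := by
          rw [abs_mul, abs_mul]
          gcongr
          · exact Real.abs_cos_le_one θ
          · exact Real.abs_cos_le_one _
      _ ≤ (k:ℝ) * |Real.sin θ| + |Real.sin θ| := by
          have := abs_nonneg (Real.sin θ)
          nlinarith [ih]
      _ = ((k+1 : ℕ):ℝ) * |Real.sin θ| := by push_cast; ring

private lemma U_eval_one (n : ℕ) : (U ℝ (n:ℤ)).eval 1 = (n:ℝ) + 1 := by
  induction n using Nat.strong_induction_on with
  | _ n ih =>
    match n with
    | 0 => simp [U_zero]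
    | 1 => norm_num [U_one]
    | (m+2) =>
      have h1 := ih (m+1) (by omega)
      have h0 := ih m (by omega)
      have e : ((m+2:ℕ) : ℤ) = (m:ℤ) + 2 := by push_cast; ring
      rw [e, U_add_two]
      push_cast at h1 h0 ⊢
      simp only [Polynomial.eval_sub, Polynomial.eval_mul, Polynomial.eval_X,
        Polynomial.eval_ofNat]
      linarith

private lemma U_eval_negone (n : ℕ) : (U ℝ (n:ℤ)).eval (-1) = (-1:ℝ)^n * ((n:ℝ) + 1) := by
  induction n using Nat.strong_induction_on with
  | _ n ih =>
    match n with
    | 0 => simp [U_zero]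
    | 1 => norm_num [U_one]
    | (m+2) =>
      have h1 := ih (m+1) (by omega)
      have h0 := ih m (by omega)
      have e : ((m+2:ℕ) : ℤ) = (m:ℤ) + 2 := by push_cast; ring
      rw [e, U_add_two]
      push_cast at h1 h0 ⊢
      simp only [Polynomial.eval_sub, Polynomial.eval_mul, Polynomial.eval_X,
        Polynomial.eval_ofNat]
      rw [h1, h0]
      ring

private lemma arccos_lt_pi' {x : ℝ} (h : -1 < x) : Real.arccos x < Real.pi := by
  rw [Real.arccos]
  have := Real.neg_pi_div_two_lt_arcsin.2 h
  linarith

private lemma bT (n : ℕ) (x : ℝ) (hx : x ∈ Icc (-1:ℝ) 1) : |(T ℝ (n:ℤ)).eval x| ≤ 1 := by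
  have hcos : Real.cos (Real.arccos x) = x := Real.cos_arccos hx.1 hx.2
  rw [← hcos, T_real_cos]
  exact Real.abs_cos_le_one _

private lemma bU (n : ℕ) (x : ℝ) (hx : x ∈ Icc (-1:ℝ) 1) : |(U ℝ (n:ℤ)).eval x| ≤ (n:ℝ) + 1 := by
  obtain h1 | h1 := eq_or_lt_of_le hx.1
  · rw [← h1, U_eval_negone]
    rw [abs_mul, abs_pow]
    simp [abs_of_nonneg (by positivity : (0:ℝ) ≤ (n:ℝ)+1)]
  obtain h2 | h2 := eq_or_lt_of_le hx.2
  · rw [h2, _root_.U_eval_one]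
    rw [abs_of_nonneg (by positivity)]
  · set θ := Real.arccos x with hθ
    have hcos : Real.cos θ = x := Real.cos_arccos hx.1 hx.2
    have hsin : 0 < Real.sin θ :=
      Real.sin_pos_of_pos_of_lt_pi (Real.arccos_pos.2 h2) (arccos_lt_pi' h1)
    have key : (U ℝ (n:ℤ)).eval x * Real.sin θ = Real.sin (((n:ℝ)+1) * θ) := by
      rw [← hcos]
      have := U_real_cos θ (n:ℤ)
      push_cast at this ⊢
      exact this
    have hb : |(U ℝ (n:ℤ)).eval x| * Real.sin θ ≤ ((n:ℝ)+1) * Real.sin θ := by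
      calc |(U ℝ (n:ℤ)).eval x| * Real.sin θ
          = |(U ℝ (n:ℤ)).eval x * Real.sin θ| := by
            rw [abs_mul, abs_of_pos hsin]
        _ = |Real.sin (((n:ℝ)+1) * θ)| := by rw [key]
        _ ≤ ((n:ℝ)+1) * |Real.sin θ| := by
            have := abs_sin_nat_mul (n+1) θ
            push_cast at this
            exact this
        _ = ((n:ℝ)+1) * Real.sin θ := by rw [abs_of_pos hsin]
    exact le_of_mul_le_mul_right hb hsin

private lemma U_step (n : ℤ) : U ℝ (n+2) = U ℝ n + 2 * T ℝ (n+2) := by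
  have h := U_eq_X_mul_U_add_T ℝ (n+1)
  have h2 := U_add_two ℝ n
  have e : n + 1 + 1 = n + 2 := by ring
  rw [e] at h
  linear_combination 2 * h - h2

private lemma bU' (n : ℕ) (x : ℝ) (hx : x ∈ Icc (-1:ℝ) 1) :
    |(derivative (U ℝ (n:ℤ))).eval x| ≤ ((n:ℝ) + 1)^3 := by
  induction n using Nat.strong_induction_on with
  | _ n ih =>
    match n with
    | 0 => norm_num [U_zero]
    | 1 => norm_num [U_one]
    | (m+2) =>
      have h0 := ih m (by omega)
      have hU1 := bU (m+1) x hx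
      have e : ((m+2:ℕ) : ℤ) = (m:ℤ) + 2 := by push_cast; ring
      have hD : derivative (U ℝ ((m:ℤ)+2)) =
          derivative (U ℝ (m:ℤ)) + 2 * ((m:ℤ)+2) * U ℝ ((m:ℤ)+1) := by
        rw [U_step, derivative_add, derivative_mul]
        have e2 : (m:ℤ) + 2 - 1 = (m:ℤ) + 1 := by ring
        rw [T_derivative_eq_U, e2]
        simp
        ring
      rw [e, hD]
      simp only [Polynomial.eval_add, Polynomial.eval_mul, Polynomial.eval_intCast,
        Polynomial.eval_natCast, Polynomial.eval_ofNat]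
      push_cast at h0 hU1 ⊢
      have habs := abs_add_le ((derivative (U ℝ (m:ℤ))).eval x)
        (2 * ((m:ℝ)+2) * (U ℝ ((m:ℤ)+1)).eval x)
      have habs2 : |2 * ((m:ℝ)+2) * (U ℝ ((m:ℤ)+1)).eval x|
          = 2 * ((m:ℝ)+2) * |(U ℝ ((m:ℤ)+1)).eval x| := by
        rw [abs_mul, abs_of_nonneg (by positivity)]
      nlinarith [Nat.cast_nonneg (α := ℝ) m, abs_nonneg ((U ℝ ((m:ℤ)+1)).eval x)]

private lemma bT' (n : ℕ) (x : ℝ) (hx : x ∈ Icc (-1:ℝ) 1) :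
    |(derivative (T ℝ (n:ℤ))).eval x| ≤ (n:ℝ)^2 := by
  match n with
  | 0 => norm_num [T_zero]
  | (m+1) =>
    have e : ((m+1:ℕ):ℤ) - 1 = (m:ℤ) := by push_cast; ring
    rw [T_derivative_eq_U, e]
    simp only [Polynomial.eval_mul, Polynomial.eval_intCast]
    rw [abs_mul]
    have hU := bU m x hx
    have h1 : |(((m+1:ℕ):ℤ):ℝ)| = (m:ℝ)+1 := by
      rw [abs_of_nonneg (by positivity)]; push_cast; ring
    rw [h1]
    have h2 : ((m+1:ℕ):ℝ)^2 = ((m:ℝ)+1) * ((m:ℝ)+1) := by push_cast; ring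
    rw [h2]
    have hm : (0:ℝ) ≤ (m:ℝ)+1 := by positivity
    nlinarith [abs_nonneg ((U ℝ (m:ℤ)).eval x)]

private lemma bT'' (n : ℕ) (x : ℝ) (hx : x ∈ Icc (-1:ℝ) 1) :
    |(derivative (derivative (T ℝ (n:ℤ)))).eval x| ≤ (n:ℝ)^4 := by
  match n with
  | 0 => norm_num [T_zero]
  | (m+1) =>
    have e : ((m+1:ℕ):ℤ) - 1 = (m:ℤ) := by push_cast; ring
    rw [T_derivative_eq_U, e, derivative_mul]
    simp only [Polynomial.derivative_intCast, zero_mul, zero_add,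
      Polynomial.eval_mul, Polynomial.eval_intCast, Polynomial.eval_add]
    rw [abs_mul]
    have hU := bU' m x hx
    have h1 : |(((m+1:ℕ):ℤ):ℝ)| = (m:ℝ)+1 := by
      rw [abs_of_nonneg (by positivity)]; push_cast; ring
    rw [h1]
    have h2 : ((m+1:ℕ):ℝ)^4 = ((m:ℝ)+1) * ((m:ℝ)+1)^3 := by push_cast; ring
    rw [h2]
    have hm : (0:ℝ) ≤ (m:ℝ)+1 := by positivity
    nlinarith [abs_nonneg ((derivative (U ℝ (m:ℤ))).eval x)]

private lemma T'_one (n : ℕ) : (derivative (T ℝ (n:ℤ))).eval 1 = (n:ℝ)^2 := by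
  match n with
  | 0 => norm_num [T_zero]
  | (m+1) =>
    have e : ((m+1:ℕ):ℤ) - 1 = (m:ℤ) := by push_cast; ring
    rw [T_derivative_eq_U, e]
    simp only [Polynomial.eval_mul, Polynomial.eval_intCast]
    rw [_root_.U_eval_one]
    push_cast
    ring

end ChebyshevBounds

/-- Let `(a_n)` be nonnegative reals with `∑ n^{10} a_n < ∞` and set
`C(x,y) = ∑ a_n T_n(⟨x,y⟩)` for `x,y ∈ S¹ ⊂ ℝ²`, where `T_n` is the Chebyshev polynomial
of the first kind. Let `x₀ ∈ S¹` and let `γ, τ : (−1,1) → S¹` be continuously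
differentiable curves with `γ(0) = τ(0) = x₀`, `γ'(0) = ξ`, `τ'(0) = σ`. Then the mixed
partial derivative `∂²/∂t∂s [C(γ(t), τ(s))]` at `(t,s) = (0,0)` exists and equals
`(∑_{n≥1} n² a_n) · ⟨ξ, σ⟩`. -/
theorem induced_metric_chebyshev_series (a : ℕ → ℝ) (ha : ∀ n, 0 ≤ a n)
    (hsum : Summable fun n : ℕ => (n : ℝ) ^ 10 * a n)
    (x₀ ξ σ : EuclideanSpace ℝ (Fin 2))
    (hx₀ : x₀ ∈ Metric.sphere (0 : EuclideanSpace ℝ (Fin 2)) 1)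
    (γ τ : ℝ → EuclideanSpace ℝ (Fin 2))
    (hγS : ∀ t ∈ Ioo (-1 : ℝ) 1, γ t ∈ Metric.sphere (0 : EuclideanSpace ℝ (Fin 2)) 1)
    (hτS : ∀ s ∈ Ioo (-1 : ℝ) 1, τ s ∈ Metric.sphere (0 : EuclideanSpace ℝ (Fin 2)) 1)
    (hγ1 : ContDiffOn ℝ 1 γ (Ioo (-1 : ℝ) 1)) (hτ1 : ContDiffOn ℝ 1 τ (Ioo (-1 : ℝ) 1))
    (hγ0 : γ 0 = x₀) (hτ0 : τ 0 = x₀)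
    (hξ : HasDerivAt γ ξ 0) (hσ : HasDerivAt τ σ 0) :
    ∃ g : ℝ → ℝ,
      (∀ t ∈ Ioo (-1 : ℝ) 1,
        HasDerivAt
          (fun s : ℝ => ∑' n : ℕ, a n * (Polynomial.Chebyshev.T ℝ n).eval ⟪γ t, τ s⟫)
          (g t) 0) ∧
      HasDerivAt g ((∑' n : ℕ, (n : ℝ) ^ 2 * a n) * ⟪ξ, σ⟫) 0 := by
  classical
  have h00 : (0:ℝ) ∈ Ioo (-1:ℝ) 1 := by norm_num
  have hx0n : ‖x₀‖ = 1 := by simpa using hx₀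
  have hγn : ∀ t ∈ Ioo (-1:ℝ) 1, ‖γ t‖ = 1 := fun t ht => by simpa using hγS t ht
  have hτn : ∀ s ∈ Ioo (-1:ℝ) 1, ‖τ s‖ = 1 := fun s hs => by simpa using hτS s hs
  have hIcc : ∀ t ∈ Ioo (-1:ℝ) 1, ∀ s ∈ Ioo (-1:ℝ) 1, ⟪γ t, τ s⟫ ∈ Icc (-1:ℝ) 1 := by
    intro t ht s hs
    rw [mem_Icc, ← abs_le]
    calc |⟪γ t, τ s⟫| ≤ ‖γ t‖ * ‖τ s‖ := abs_real_inner_le_norm _ _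
      _ = 1 := by rw [hγn t ht, hτn s hs]; ring
  have hIccx : ∀ t ∈ Ioo (-1:ℝ) 1, ⟪γ t, x₀⟫ ∈ Icc (-1:ℝ) 1 := by
    intro t ht
    rw [mem_Icc, ← abs_le]
    calc |⟪γ t, x₀⟫| ≤ ‖γ t‖ * ‖x₀‖ := abs_real_inner_le_norm _ _
      _ = 1 := by rw [hγn t ht, hx0n]; ring
  have hxx : ⟪x₀, x₀⟫ = (1:ℝ) := by
    rw [real_inner_self_eq_norm_mul_norm, hx0n]; norm_num
  have horth : ⟪ξ, x₀⟫ = 0 := by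
    have h1 : HasDerivAt (fun t => ⟪γ t, γ t⟫) (⟪γ 0, ξ⟫ + ⟪ξ, γ 0⟫) 0 := hξ.inner ℝ hξ
    have h2 : (fun t => ⟪γ t, γ t⟫) =ᶠ[nhds (0:ℝ)] fun _ => (1:ℝ) := by
      filter_upwards [isOpen_Ioo.mem_nhds h00] with t ht
      rw [real_inner_self_eq_norm_mul_norm, hγn t ht]; norm_num
    have h3 := (h1.congr_of_eventuallyEq h2.symm).unique (hasDerivAt_const 0 (1:ℝ))
    rw [hγ0] at h3
    have hcomm := real_inner_comm ξ x₀
    linarith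
  -- summability facts
  have key_le : ∀ k : ℕ, 1 ≤ k → k ≤ 10 → Summable (fun n : ℕ => (n:ℝ)^k * a n) := by
    intro k hk1 hk10
    apply Summable.of_nonneg_of_le (fun n => mul_nonneg (by positivity) (ha n)) _ hsum
    intro n
    rcases Nat.eq_zero_or_pos n with h | h
    · subst h
      simp [zero_pow (by omega : k ≠ 0)]
    · have h1 : (1:ℝ) ≤ (n:ℝ) := by exact_mod_cast h
      exact mul_le_mul_of_nonneg_right (pow_le_pow_right₀ h1 hk10) (ha n)
  have hsum2 := key_le 2 (by norm_num) (by norm_num)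
  have hsum4 := key_le 4 (by norm_num) (by norm_num)
  have hsum0 : Summable a := by
    rw [← summable_nat_add_iff 1]
    apply Summable.of_nonneg_of_le (fun n => ha _) _ ((summable_nat_add_iff 1).2 hsum)
    intro n
    have h1 : (1:ℝ) ≤ ((n+1:ℕ):ℝ)^10 := by
      apply one_le_pow₀
      push_cast
      linarith [Nat.cast_nonneg (α := ℝ) n]
    nlinarith [ha (n+1)]
  -- differentiability of curves
  have hτdiff : ∀ s ∈ Ioo (-1:ℝ) 1, HasDerivAt τ (deriv τ s) s := fun s hs =>
    ((hτ1.contDiffAt (isOpen_Ioo.mem_nhds hs)).differentiableAt one_ne_zero).hasDerivAt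
  have hγdiff : ∀ t ∈ Ioo (-1:ℝ) 1, HasDerivAt γ (deriv γ t) t := fun t ht =>
    ((hγ1.contDiffAt (isOpen_Ioo.mem_nhds ht)).differentiableAt one_ne_zero).hasDerivAt
  have hdτ0 : deriv τ 0 = σ := hσ.deriv
  have hdγ0 : deriv γ 0 = ξ := hξ.deriv
  -- local bounds on deriv τ
  have hτev : ∀ᶠ s in nhds (0:ℝ), s ∈ Ioo (-1:ℝ) 1 ∧ ‖deriv τ s‖ ≤ ‖σ‖ + 1 := by
    have h1 : ∀ᶠ s in nhds (0:ℝ), s ∈ Ioo (-1:ℝ) 1 := isOpen_Ioo.mem_nhds h00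
    have h2 : ContinuousAt (deriv τ) 0 :=
      (hτ1.continuousOn_deriv_of_isOpen isOpen_Ioo le_rfl).continuousAt
        (isOpen_Ioo.mem_nhds h00)
    have h3 : Filter.Tendsto (fun s => ‖deriv τ s‖) (nhds 0) (nhds ‖deriv τ 0‖) :=
      continuous_norm.continuousAt.comp h2
    rw [hdτ0] at h3
    have h4 : ∀ᶠ s in nhds (0:ℝ), ‖deriv τ s‖ < ‖σ‖ + 1 :=
      h3.eventually_lt_const (by linarith)
    filter_upwards [h1, h4] with s hs1 hs2
    exact ⟨hs1, hs2.le⟩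
  obtain ⟨δ₁, hδ₁pos, hδ₁⟩ := Metric.eventually_nhds_iff.1 hτev
  have hγev : ∀ᶠ t in nhds (0:ℝ), t ∈ Ioo (-1:ℝ) 1 ∧ ‖deriv γ t‖ ≤ ‖ξ‖ + 1 := by
    have h1 : ∀ᶠ t in nhds (0:ℝ), t ∈ Ioo (-1:ℝ) 1 := isOpen_Ioo.mem_nhds h00
    have h2 : ContinuousAt (deriv γ) 0 :=
      (hγ1.continuousOn_deriv_of_isOpen isOpen_Ioo le_rfl).continuousAt
        (isOpen_Ioo.mem_nhds h00)
    have h3 : Filter.Tendsto (fun t => ‖deriv γ t‖) (nhds 0) (nhds ‖deriv γ 0‖) :=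
      continuous_norm.continuousAt.comp h2
    rw [hdγ0] at h3
    have h4 : ∀ᶠ t in nhds (0:ℝ), ‖deriv γ t‖ < ‖ξ‖ + 1 :=
      h3.eventually_lt_const (by linarith)
    filter_upwards [h1, h4] with t ht1 ht2
    exact ⟨ht1, ht2.le⟩
  obtain ⟨δ₂, hδ₂pos, hδ₂⟩ := Metric.eventually_nhds_iff.1 hγev
  have hball₁ : ∀ y ∈ Metric.ball (0:ℝ) δ₁, y ∈ Ioo (-1:ℝ) 1 ∧ ‖deriv τ y‖ ≤ ‖σ‖ + 1 :=
    fun y hy => hδ₁ (by simpa [Metric.mem_ball] using hy)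
  have hball₂ : ∀ y ∈ Metric.ball (0:ℝ) δ₂, y ∈ Ioo (-1:ℝ) 1 ∧ ‖deriv γ y‖ ≤ ‖ξ‖ + 1 :=
    fun y hy => hδ₂ (by simpa [Metric.mem_ball] using hy)
  refine ⟨fun t => ∑' n : ℕ,
    a n * ((Polynomial.derivative (Polynomial.Chebyshev.T ℝ (n:ℤ))).eval ⟪γ t, x₀⟫
      * ⟪γ t, σ⟫), ?_, ?_⟩
  · -- Part 1: derivative in s, for each fixed t
    intro t ht
    have main := hasDerivAt_tsum_of_isPreconnected
      (u := fun n : ℕ => ((n:ℝ)^2 * a n) * (‖σ‖ + 1))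
      (g := fun (n : ℕ) (s : ℝ) => a n * (Polynomial.Chebyshev.T ℝ (n:ℤ)).eval ⟪γ t, τ s⟫)
      (g' := fun (n : ℕ) (s : ℝ) =>
        a n * ((Polynomial.derivative (Polynomial.Chebyshev.T ℝ (n:ℤ))).eval ⟪γ t, τ s⟫
          * ⟪γ t, deriv τ s⟫))
      (hsum2.mul_right _) Metric.isOpen_ball (convex_ball (0:ℝ) δ₁).isPreconnected
      (fun n y hy => by
        obtain ⟨hy1, hy2⟩ := hball₁ y hy
        have hinner : HasDerivAt (fun s => ⟪γ t, τ s⟫) ⟪γ t, deriv τ y⟫ y := by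
          simpa using (hasDerivAt_const y (γ t)).inner ℝ (hτdiff y hy1)
        have hcomp := (Polynomial.hasDerivAt (Polynomial.Chebyshev.T ℝ (n:ℤ))
          (⟪γ t, τ y⟫ : ℝ)).comp y hinner
        exact hcomp.const_mul (a n))
      (fun n y hy => by
        obtain ⟨hy1, hy2⟩ := hball₁ y hy
        have hi : ⟪γ t, τ y⟫ ∈ Icc (-1:ℝ) 1 := hIcc t ht y hy1
        have hb1 := bT' n _ hi
        have hb2 : |⟪γ t, deriv τ y⟫| ≤ ‖σ‖ + 1 := by
          calc |⟪γ t, deriv τ y⟫| ≤ ‖γ t‖ * ‖deriv τ y‖ := abs_real_inner_le_norm _ _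
            _ = ‖deriv τ y‖ := by rw [hγn t ht]; ring
            _ ≤ ‖σ‖ + 1 := hy2
        rw [Real.norm_eq_abs, abs_mul, abs_mul, abs_of_nonneg (ha n)]
        calc a n * (|(Polynomial.derivative (Polynomial.Chebyshev.T ℝ (n:ℤ))).eval ⟪γ t, τ y⟫|
              * |⟪γ t, deriv τ y⟫|)
            ≤ a n * ((n:ℝ)^2 * (‖σ‖ + 1)) := by
              apply mul_le_mul_of_nonneg_left _ (ha n)
              exact mul_le_mul hb1 hb2 (abs_nonneg _) (by positivity)
          _ = ((n:ℝ)^2 * a n) * (‖σ‖ + 1) := by ring)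
      (Metric.mem_ball_self hδ₁pos)
      (by
        apply Summable.of_norm_bounded hsum0
        intro n
        rw [Real.norm_eq_abs, abs_mul, abs_of_nonneg (ha n)]
        have hb := bT n _ (hIcc t ht 0 h00)
        nlinarith [ha n, abs_nonneg ((Polynomial.Chebyshev.T ℝ (n:ℤ)).eval ⟪γ t, τ 0⟫)])
      (Metric.mem_ball_self hδ₁pos)
    beta_reduce at main
    rw [hdτ0, hτ0] at main
    exact main
  · -- Part 2: derivative of g in t
    have main := hasDerivAt_tsum_of_isPreconnected
      (u := fun n : ℕ => ((n:ℝ)^4 * a n) * ((‖ξ‖ + 1) * ‖σ‖)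
        + ((n:ℝ)^2 * a n) * ((‖ξ‖ + 1) * ‖σ‖))
      (g := fun (n : ℕ) (z : ℝ) =>
        a n * ((Polynomial.derivative (Polynomial.Chebyshev.T ℝ (n:ℤ))).eval ⟪γ z, x₀⟫
          * ⟪γ z, σ⟫))
      (g' := fun (n : ℕ) (z : ℝ) =>
        a n * ((Polynomial.derivative (Polynomial.derivative
            (Polynomial.Chebyshev.T ℝ (n:ℤ)))).eval ⟪γ z, x₀⟫ * ⟪deriv γ z, x₀⟫ * ⟪γ z, σ⟫
          + (Polynomial.derivative (Polynomial.Chebyshev.T ℝ (n:ℤ))).eval ⟪γ z, x₀⟫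
            * ⟪deriv γ z, σ⟫))
      ((hsum4.mul_right _).add (hsum2.mul_right _))
      Metric.isOpen_ball (convex_ball (0:ℝ) δ₂).isPreconnected
      (fun n y hy => by
        obtain ⟨hy1, hy2⟩ := hball₂ y hy
        have hin1 : HasDerivAt (fun z => ⟪γ z, x₀⟫) ⟪deriv γ y, x₀⟫ y := by
          simpa using (hγdiff y hy1).inner ℝ (hasDerivAt_const y x₀)
        have hin2 : HasDerivAt (fun z => ⟪γ z, σ⟫) ⟪deriv γ y, σ⟫ y := by
          simpa using (hγdiff y hy1).inner ℝ (hasDerivAt_const y σ)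
        have hf1 : HasDerivAt
            (fun z => (Polynomial.derivative (Polynomial.Chebyshev.T ℝ (n:ℤ))).eval ⟪γ z, x₀⟫)
            ((Polynomial.derivative (Polynomial.derivative
              (Polynomial.Chebyshev.T ℝ (n:ℤ)))).eval ⟪γ y, x₀⟫ * ⟪deriv γ y, x₀⟫) y := by
          have := (Polynomial.hasDerivAt (Polynomial.derivative (Polynomial.Chebyshev.T ℝ (n:ℤ)))
            (⟪γ y, x₀⟫ : ℝ)).comp y hin1
          exact this
        exact (hf1.mul hin2).const_mul (a n))
      (fun n y hy => by
        obtain ⟨hy1, hy2⟩ := hball₂ y hy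
        have hi : ⟪γ y, x₀⟫ ∈ Icc (-1:ℝ) 1 := hIccx y hy1
        have hA := bT'' n _ hi
        have hD := bT' n _ hi
        have hB : |⟪deriv γ y, x₀⟫| ≤ ‖ξ‖ + 1 := by
          calc |⟪deriv γ y, x₀⟫| ≤ ‖deriv γ y‖ * ‖x₀‖ := abs_real_inner_le_norm _ _
            _ = ‖deriv γ y‖ := by rw [hx0n]; ring
            _ ≤ ‖ξ‖ + 1 := hy2
        have hC : |⟪γ y, σ⟫| ≤ ‖σ‖ := by
          calc |⟪γ y, σ⟫| ≤ ‖γ y‖ * ‖σ‖ := abs_real_inner_le_norm _ _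
            _ = ‖σ‖ := by rw [hγn y hy1]; ring
        have hE : |⟪deriv γ y, σ⟫| ≤ (‖ξ‖ + 1) * ‖σ‖ := by
          calc |⟪deriv γ y, σ⟫| ≤ ‖deriv γ y‖ * ‖σ‖ := abs_real_inner_le_norm _ _
            _ ≤ (‖ξ‖ + 1) * ‖σ‖ := by
              apply mul_le_mul_of_nonneg_right hy2 (norm_nonneg _)
        have h1 : |(Polynomial.derivative (Polynomial.derivative
              (Polynomial.Chebyshev.T ℝ (n:ℤ)))).eval ⟪γ y, x₀⟫ * ⟪deriv γ y, x₀⟫ * ⟪γ y, σ⟫|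
            ≤ (n:ℝ)^4 * ((‖ξ‖ + 1) * ‖σ‖) := by
          rw [abs_mul, abs_mul]
          calc |(Polynomial.derivative (Polynomial.derivative
                (Polynomial.Chebyshev.T ℝ (n:ℤ)))).eval ⟪γ y, x₀⟫| * |⟪deriv γ y, x₀⟫|
                * |⟪γ y, σ⟫|
              ≤ ((n:ℝ)^4 * (‖ξ‖ + 1)) * ‖σ‖ := by
                apply mul_le_mul _ hC (abs_nonneg _) (by positivity)
                exact mul_le_mul hA hB (abs_nonneg _) (by positivity)
            _ = (n:ℝ)^4 * ((‖ξ‖ + 1) * ‖σ‖) := by ring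
        have h2 : |(Polynomial.derivative (Polynomial.Chebyshev.T ℝ (n:ℤ))).eval ⟪γ y, x₀⟫
              * ⟪deriv γ y, σ⟫| ≤ (n:ℝ)^2 * ((‖ξ‖ + 1) * ‖σ‖) := by
          rw [abs_mul]
          exact mul_le_mul hD hE (abs_nonneg _) (by positivity)
        have h3 := (abs_add_le _ _).trans (add_le_add h1 h2)
        rw [Real.norm_eq_abs, abs_mul, abs_of_nonneg (ha n)]
        calc a n * |(Polynomial.derivative (Polynomial.derivative
              (Polynomial.Chebyshev.T ℝ (n:ℤ)))).eval ⟪γ y, x₀⟫ * ⟪deriv γ y, x₀⟫ * ⟪γ y, σ⟫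
            + (Polynomial.derivative (Polynomial.Chebyshev.T ℝ (n:ℤ))).eval ⟪γ y, x₀⟫
              * ⟪deriv γ y, σ⟫|
            ≤ a n * ((n:ℝ)^4 * ((‖ξ‖ + 1) * ‖σ‖) + (n:ℝ)^2 * ((‖ξ‖ + 1) * ‖σ‖)) :=
              mul_le_mul_of_nonneg_left h3 (ha n)
          _ = ((n:ℝ)^4 * a n) * ((‖ξ‖ + 1) * ‖σ‖)
              + ((n:ℝ)^2 * a n) * ((‖ξ‖ + 1) * ‖σ‖) := by ring)
      (Metric.mem_ball_self hδ₂pos)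
      (by
        apply Summable.of_norm_bounded (hsum2.mul_right ‖σ‖)
        intro n
        rw [Real.norm_eq_abs, abs_mul, abs_mul, abs_of_nonneg (ha n)]
        have hi : ⟪γ 0, x₀⟫ ∈ Icc (-1:ℝ) 1 := hIccx 0 h00
        have hD := bT' n _ hi
        have hC : |⟪γ 0, σ⟫| ≤ ‖σ‖ := by
          calc |⟪γ 0, σ⟫| ≤ ‖γ 0‖ * ‖σ‖ := abs_real_inner_le_norm _ _
            _ = ‖σ‖ := by rw [hγn 0 h00]; ring
        calc a n * (|(Polynomial.derivative (Polynomial.Chebyshev.T ℝ (n:ℤ))).eval ⟪γ 0, x₀⟫|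
              * |⟪γ 0, σ⟫|)
            ≤ a n * ((n:ℝ)^2 * ‖σ‖) := by
              apply mul_le_mul_of_nonneg_left _ (ha n)
              exact mul_le_mul hD hC (abs_nonneg _) (by positivity)
          _ = ((n:ℝ)^2 * a n) * ‖σ‖ := by ring)
      (Metric.mem_ball_self hδ₂pos)
    beta_reduce at main
    have hval : ∀ n : ℕ,
        a n * ((Polynomial.derivative (Polynomial.derivative
            (Polynomial.Chebyshev.T ℝ (n:ℤ)))).eval ⟪γ 0, x₀⟫ * ⟪deriv γ 0, x₀⟫ * ⟪γ 0, σ⟫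
          + (Polynomial.derivative (Polynomial.Chebyshev.T ℝ (n:ℤ))).eval ⟪γ 0, x₀⟫
            * ⟪deriv γ 0, σ⟫)
        = ((n:ℝ)^2 * a n) * ⟪ξ, σ⟫ := by
      intro n
      rw [hdγ0, hγ0, hxx, horth, T'_one n]
      ring
    have heq : (∑' n : ℕ,
        a n * ((Polynomial.derivative (Polynomial.derivative
            (Polynomial.Chebyshev.T ℝ (n:ℤ)))).eval ⟪γ 0, x₀⟫ * ⟪deriv γ 0, x₀⟫ * ⟪γ 0, σ⟫
          + (Polynomial.derivative (Polynomial.Chebyshev.T ℝ (n:ℤ))).eval ⟪γ 0, x₀⟫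
            * ⟪deriv γ 0, σ⟫))
        = (∑' n : ℕ, (n:ℝ)^2 * a n) * ⟪ξ, σ⟫ := by
      rw [tsum_congr hval]
      exact tsum_mul_right
    rw [heq] at main
    exact main
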